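/- Let W : Ω → M_q(ℂ) be a measurable function with values in the positive semidefinite q×q matrices, integrable with respect to a measure λ. For measurable ℂ^q-valued functions f with ∫ ‖W^{1/2} f‖² dλ < ∞ and h with h(ω) ∈ range(W(ω)) for all ω and ∫ h* W^† h dλ < ∞ (where W^† denotes the pointwise Moore–Penrose inverse), one has ∫ |h* f| dλ ≤ (∫ ‖W^{1/2} f‖² dλ)^{1/2} · (∫ h* W^† h dλ)^{1/2}. -/

import Mathlib

open MeasureTheory Set Matrix
open scoped ComplexOrder

/-- `B` is the Moore–Penrose inverse of `A` (the four Penrose conditions). -/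
def IsMoorePenroseInverse {q : ℕ} (A B : Matrix (Fin q) (Fin q) ℂ) : Prop :=
  A * B * A = A ∧ B * A * B = B ∧ (A * B)ᴴ = A * B ∧ (B * A)ᴴ = B * A

lemma dot_cs_aux {q : ℕ} (u v : Fin q → ℂ) :
    ‖star u ⬝ᵥ v‖ ^ 2 ≤ (star u ⬝ᵥ u).re * (star v ⬝ᵥ v).re := by
  have h1 := (EuclideanSpace.inner_toLp_toLp (𝕜 := ℂ) u v).trans (dotProduct_comm _ _)
  have h2 := (EuclideanSpace.inner_toLp_toLp (𝕜 := ℂ) u u).trans (dotProduct_comm _ _)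
  have h3 := (EuclideanSpace.inner_toLp_toLp (𝕜 := ℂ) v v).trans (dotProduct_comm _ _)
  set U := WithLp.toLp 2 u
  set V := WithLp.toLp 2 v
  have n2 : (star u ⬝ᵥ u).re = ‖U‖ ^ 2 := by
    rw [← h2, inner_self_eq_norm_sq_to_K]; simp [← Complex.ofReal_pow]
  have n3 : (star v ⬝ᵥ v).re = ‖V‖ ^ 2 := by
    rw [← h3, inner_self_eq_norm_sq_to_K]; simp [← Complex.ofReal_pow]
  rw [← h1, n2, n3]
  calc ‖inner ℂ U V‖ ^ 2 ≤ (‖U‖ * ‖V‖) ^ 2 := by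
        have := norm_inner_le_norm (𝕜 := ℂ) U V
        exact pow_le_pow_left₀ (by positivity) this 2
    _ = ‖U‖ ^ 2 * ‖V‖ ^ 2 := by ring

open scoped MatrixOrder in
lemma key_aux {q : ℕ} {W Wd : Matrix (Fin q) (Fin q) ℂ} (hW : W.PosSemidef)
    (hP : W * Wd * W = W) {f h : Fin q → ℂ} (hr : h ∈ Set.range W.mulVec) :
    ‖star h ⬝ᵥ f‖ ^ 2 ≤ (star f ⬝ᵥ W.mulVec f).re * (star h ⬝ᵥ Wd.mulVec h).re := by
  obtain ⟨x, rfl⟩ := hr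
  set A := CFC.sqrt W with hA
  have hAH : Aᴴ = A := (CFC.sqrt_nonneg W).posSemidef.1
  have hAA : A * A = W := CFC.sqrt_mul_sqrt_self W hW.nonneg
  have hP' : W * (Wd * W) = W := by rw [← mul_assoc]; exact hP
  have e1 : star (W.mulVec x) ⬝ᵥ f = star (A.mulVec x) ⬝ᵥ (A.mulVec f) := by
    simp [star_mulVec, hW.1.eq, hAH, dotProduct_mulVec, Matrix.vecMul_vecMul, hAA]
  have e2 : star f ⬝ᵥ W.mulVec f = star (A.mulVec f) ⬝ᵥ (A.mulVec f) := by
    simp [star_mulVec, hAH, dotProduct_mulVec, Matrix.vecMul_vecMul, hAA]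
  have e3 : star (W.mulVec x) ⬝ᵥ Wd.mulVec (W.mulVec x)
      = star (A.mulVec x) ⬝ᵥ (A.mulVec x) := by
    simp [star_mulVec, hW.1.eq, hAH, dotProduct_mulVec, Matrix.mulVec_mulVec,
      Matrix.vecMul_vecMul, hAA, hP']
  rw [e1, e2, e3]
  have := dot_cs_aux (A.mulVec x) (A.mulVec f)
  linarith

/-- Matrix Cauchy–Schwarz inequality in `L²(W dλ)`:
`∫ |h* f| dλ ≤ (∫ ‖W^{1/2} f‖² dλ)^{1/2} (∫ h* W^† h dλ)^{1/2}`.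
Here `‖W^{1/2} f‖² = f* W f` (real and nonnegative since `W` is positive semidefinite),
and similarly `h* W^† h` is real and nonnegative. -/
theorem stmt9 {Ω : Type*} [MeasurableSpace Ω] (lam : Measure Ω) (q : ℕ)
    (W Wdag : Ω → Matrix (Fin q) (Fin q) ℂ)
    (hWmeas : ∀ j k, Measurable (fun ω => W ω j k))
    (hWpsd : ∀ ω, (W ω).PosSemidef)
    (hWint : ∀ j k, Integrable (fun ω => W ω j k) lam)
    (hdag : ∀ ω, IsMoorePenroseInverse (W ω) (Wdag ω))
    (f h : Ω → Fin q → ℂ) (hf : Measurable f) (hh : Measurable h)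
    (hhran : ∀ ω, h ω ∈ Set.range (W ω).mulVec)
    (hfint : ∫⁻ ω, ENNReal.ofReal ((star (f ω) ⬝ᵥ (W ω).mulVec (f ω)).re) ∂lam < ⊤)
    (hhint : ∫⁻ ω, ENNReal.ofReal ((star (h ω) ⬝ᵥ (Wdag ω).mulVec (h ω)).re) ∂lam < ⊤) :
    ∫⁻ ω, ENNReal.ofReal ‖star (h ω) ⬝ᵥ f ω‖ ∂lam ≤
      (∫⁻ ω, ENNReal.ofReal ((star (f ω) ⬝ᵥ (W ω).mulVec (f ω)).re) ∂lam) ^ (1/2 : ℝ) *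
        (∫⁻ ω, ENNReal.ofReal ((star (h ω) ⬝ᵥ (Wdag ω).mulVec (h ω)).re) ∂lam) ^ (1/2 : ℝ) := by
  set a : Ω → ℝ := fun ω => (star (f ω) ⬝ᵥ (W ω).mulVec (f ω)).re with ha
  set b : Ω → ℝ := fun ω => (star (h ω) ⬝ᵥ (Wdag ω).mulVec (h ω)).re with hb
  set c : Ω → ℝ := fun ω => ‖star (h ω) ⬝ᵥ f ω‖ with hc
  set F : Ω → ENNReal := fun ω => (ENNReal.ofReal (a ω)) ^ (1/2 : ℝ) with hF
  set G : Ω → ENNReal := fun ω => (ENNReal.ofReal (b ω)) ^ (1/2 : ℝ) with hG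
  -- nonnegativity of a
  have ha0 : ∀ ω, 0 ≤ a ω := by
    intro ω
    have := (hWpsd ω).dotProduct_mulVec_nonneg (f ω)
    rw [Complex.le_def] at this
    simpa using this.1
  -- central pointwise inequality
  have keyE : ∀ ω, ENNReal.ofReal (c ω) ≤ F ω * G ω := by
    intro ω
    have hk := key_aux (hWpsd ω) (hdag ω).1 (hhran ω) (f := f ω)
    have hsq : ENNReal.ofReal (c ω) ^ (2 : ℝ)
        ≤ ENNReal.ofReal (a ω) * ENNReal.ofReal (b ω) := by
      rw [show ((2:ℝ) = ((2:ℕ):ℝ)) by norm_num, ENNReal.rpow_natCast,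
        ← ENNReal.ofReal_pow (norm_nonneg _), ← ENNReal.ofReal_mul (ha0 ω)]
      exact ENNReal.ofReal_le_ofReal hk
    calc ENNReal.ofReal (c ω)
        = (ENNReal.ofReal (c ω) ^ (2 : ℝ)) ^ (1/2 : ℝ) := by
          rw [← ENNReal.rpow_mul]; norm_num
      _ ≤ (ENNReal.ofReal (a ω) * ENNReal.ofReal (b ω)) ^ (1/2 : ℝ) :=
          ENNReal.rpow_le_rpow hsq (by norm_num)
      _ = F ω * G ω := ENNReal.mul_rpow_of_nonneg _ _ (by norm_num)
  -- measurability
  have mdot : ∀ (u v : Ω → Fin q → ℂ), Measurable u → Measurable v →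
      Measurable (fun ω => star (u ω) ⬝ᵥ v ω) := by
    intro u v hu hv
    apply Finset.measurable_sum
    intro i _
    exact (continuous_star.measurable.comp ((measurable_pi_apply i).comp hu)).mul
      ((measurable_pi_apply i).comp hv)
  have hWf : Measurable (fun ω => (W ω).mulVec (f ω)) := by
    apply measurable_pi_lambda
    intro j
    simp only [Matrix.mulVec, dotProduct]
    apply Finset.measurable_sum
    intro k _
    exact (hWmeas j k).mul ((measurable_pi_apply k).comp hf)
  have ma : Measurable a := Complex.measurable_re.comp (mdot f (fun ω => (W ω).mulVec (f ω)) hf hWf)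
  have mc : Measurable (fun ω => ENNReal.ofReal (c ω)) :=
    (continuous_norm.measurable.comp (mdot h f hh hf)).ennreal_ofReal
  have mF : Measurable F :=
    (ENNReal.continuous_rpow_const.measurable).comp ma.ennreal_ofReal
  -- the auxiliary function
  set Gd : Ω → ENNReal := fun ω => ENNReal.ofReal (c ω) / F ω with hGd
  have mGd : Measurable Gd := mc.div mF
  have hGdle : ∀ ω, Gd ω ≤ G ω := fun ω =>
    ENNReal.div_le_of_le_mul (by rw [mul_comm]; exact keyE ω)
  have hptwise : ∀ ω, ENNReal.ofReal (c ω) ≤ F ω * Gd ω := by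
    intro ω
    by_cases h0 : F ω = 0
    · have := keyE ω
      rw [h0, zero_mul] at this
      simpa [le_zero_iff.mp this] using le_refl (0 : ENNReal)
    · rw [hGd, ENNReal.mul_div_cancel h0
        (ENNReal.rpow_ne_top_of_nonneg (by norm_num : (0:ℝ) ≤ 1/2) ENNReal.ofReal_ne_top)]
  have hconj : (2:ℝ).HolderConjugate 2 := Real.HolderConjugate.two_two
  calc ∫⁻ ω, ENNReal.ofReal (c ω) ∂lam
      ≤ ∫⁻ ω, (F * Gd) ω ∂lam := lintegral_mono fun ω => hptwise ω
    _ ≤ (∫⁻ ω, F ω ^ (2:ℝ) ∂lam) ^ (1/2:ℝ) * (∫⁻ ω, Gd ω ^ (2:ℝ) ∂lam) ^ (1/2:ℝ) :=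
        ENNReal.lintegral_mul_le_Lp_mul_Lq lam hconj mF.aemeasurable mGd.aemeasurable
    _ ≤ (∫⁻ ω, ENNReal.ofReal (a ω) ∂lam) ^ (1/2:ℝ) *
          (∫⁻ ω, ENNReal.ofReal (b ω) ∂lam) ^ (1/2:ℝ) := by
        have eF : ∫⁻ ω, F ω ^ (2:ℝ) ∂lam = ∫⁻ ω, ENNReal.ofReal (a ω) ∂lam := by
          apply lintegral_congr
          intro ω
          show (ENNReal.ofReal (a ω) ^ (1/2:ℝ)) ^ (2:ℝ) = _
          rw [← ENNReal.rpow_mul]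
          norm_num
        have eGd : ∫⁻ ω, Gd ω ^ (2:ℝ) ∂lam ≤ ∫⁻ ω, ENNReal.ofReal (b ω) ∂lam := by
          apply lintegral_mono
          intro ω
          calc Gd ω ^ (2:ℝ) ≤ G ω ^ (2:ℝ) := ENNReal.rpow_le_rpow (hGdle ω) (by norm_num)
            _ = ENNReal.ofReal (b ω) := by
                show (ENNReal.ofReal (b ω) ^ (1/2:ℝ)) ^ (2:ℝ) = _
                rw [← ENNReal.rpow_mul]
                norm_num
        rw [eF]
        exact mul_le_mul' le_rfl (ENNReal.rpow_le_rpow eGd (by norm_num))
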